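/- Let c ∈ (0,1] and let μ be a Borel probability measure on [0,∞) (with log x semi-integrable with respect to μ if c = 1). Then [μ]_c < ∞ if and only if ∫ log(1+x) dμ(x) < ∞. -/

import Mathlib

open MeasureTheory Filter Topology
open scoped ENNReal

noncomputable def elogr (t : ℝ) : EReal := if t ≤ 0 then ⊥ else ((Real.log t : ℝ) : EReal)

/-- The Halász–Székely kernel, with values in `[-∞, +∞)` (`EReal`). -/
noncomputable def hsKernel (c x y : ℝ) : EReal :=
  if c = 0 then ((Real.log y + y⁻¹ * x - 1 : ℝ) : EReal)
  else ((Real.log y : ℝ) : EReal) + ((c⁻¹ : ℝ) : EReal) * elogr (c * y⁻¹ * x + 1 - c)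

/-- The nonnegative part of an extended real, as an element of `[0,∞]`. -/
noncomputable def erealToENNReal (x : EReal) : ℝ≥0∞ :=
  if x = ⊤ then ⊤ else ENNReal.ofReal x.toReal

/-- Integral of an `EReal`-valued function: positive part minus negative part. -/
noncomputable def eIntegral (μ : Measure ℝ) (f : ℝ → EReal) : EReal :=
  ((∫⁻ x, erealToENNReal (f x) ∂μ : ℝ≥0∞) : EReal) - ((∫⁻ x, erealToENNReal (-f x) ∂μ : ℝ≥0∞) : EReal)

/-- Exponential on `EReal`, with values in `[0,∞]`. -/
noncomputable def eexp (x : EReal) : ℝ≥0∞ :=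
  if x = ⊤ then ⊤ else if x = ⊥ then 0 else ENNReal.ofReal (Real.exp x.toReal)

/-- The Halász–Székely barycenter `[μ]_c ∈ [0,∞]`. -/
noncomputable def hsBary (c : ℝ) (μ : Measure ℝ) : ℝ≥0∞ :=
  eexp (⨅ y : {y : ℝ // 0 < y}, eIntegral μ (fun x => hsKernel c x y))

/-- The function `B`. -/
noncomputable def hsB (c : ℝ) : ℝ :=
  if c = 0 then 0 else if c = 1 then 1 else c * (1 - c) ^ ((1 - c) / c)

/-- The uniform probability measure on the entries of a tuple. -/
noncomputable def unifMeasure {n : ℕ} (x : Fin n → ℝ) : Measure ℝ :=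
  (n : ℝ≥0∞)⁻¹ • ∑ i, MeasureTheory.Measure.dirac (x i)

/-- The Halász–Székely mean of a tuple. -/
noncomputable def hsMean (c : ℝ) {n : ℕ} (x : Fin n → ℝ) : ℝ≥0∞ := hsBary c (unifMeasure x)

/-- The `k`-th symmetric mean of an `n`-tuple. -/
noncomputable def symMean {n : ℕ} (k : ℕ) (x : Fin n → ℝ) : ℝ :=
  ((∑ s ∈ Finset.univ.powersetCard k, ∏ i ∈ s, x i) / (n.choose k)) ^ ((k : ℝ)⁻¹)

lemma erealToENNReal_coe (r : ℝ) : erealToENNReal r = ENNReal.ofReal r := by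
  simp [erealToENNReal]

lemma erealToENNReal_bot : erealToENNReal ⊥ = 0 := by
  simp [erealToENNReal]

lemma erealToENNReal_top : erealToENNReal ⊤ = ⊤ := by
  simp [erealToENNReal]

lemma coe_ennreal_sub_eq_top_iff (a b : ℝ≥0∞) :
    ((a : EReal) - (b : EReal) = ⊤) ↔ a = ⊤ ∧ b ≠ ⊤ := by
  rcases eq_or_ne b ⊤ with hb | hb
  · simp only [hb, EReal.coe_ennreal_top, ne_eq, not_true, and_false, iff_false]
    rw [sub_eq_add_neg]
    simp [EReal.add_bot]
  · have hb' : (b : EReal) ≠ ⊥ := EReal.coe_ennreal_ne_bot b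
    have hb'' : (b : EReal) ≠ ⊤ := by simpa [EReal.coe_ennreal_eq_top_iff] using hb
    constructor
    · intro h
      refine ⟨?_, hb⟩
      by_contra ha
      have ha' : (a : EReal) ≠ ⊤ := by simpa [EReal.coe_ennreal_eq_top_iff] using ha
      have ha'' : (a : EReal) ≠ ⊥ := EReal.coe_ennreal_ne_bot a
      lift (a : EReal) to ℝ using ⟨ha', ha''⟩ with x
      lift (b : EReal) to ℝ using ⟨hb'', hb'⟩ with y
      rw [← EReal.coe_sub] at h
      exact EReal.coe_ne_top _ h
    · rintro ⟨ha, -⟩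
      subst ha
      rw [EReal.coe_ennreal_top, sub_eq_add_neg, EReal.top_add_of_ne_bot]
      simp [EReal.neg_eq_bot_iff, hb'']

lemma eexp_lt_top_iff (x : EReal) : eexp x < ⊤ ↔ x ≠ ⊤ := by
  unfold eexp
  split_ifs with h1 h2 <;> simp_all [ENNReal.ofReal_lt_top]

lemma hsKernel_eq_coe {c x y : ℝ} (hc : 0 < c) (hy : 0 < y)
    (ht : 0 < c * y⁻¹ * x + 1 - c) :
    hsKernel c x y = ((Real.log y + c⁻¹ * Real.log (c * y⁻¹ * x + 1 - c) : ℝ) : EReal) := by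
  unfold hsKernel elogr
  rw [if_neg hc.ne', if_neg (not_le.2 ht)]
  norm_cast

lemma hsKernel_one_eq {x y : ℝ} (hx : 0 < x) (hy : 0 < y) :
    hsKernel 1 x y = ((Real.log x : ℝ) : EReal) := by
  have ht : (0:ℝ) < 1 * y⁻¹ * x + 1 - 1 := by
    have := mul_pos (inv_pos.2 hy) hx; simpa using this
  rw [hsKernel_eq_coe one_pos hy ht]
  have : (1:ℝ) * y⁻¹ * x + 1 - 1 = y⁻¹ * x := by ring
  rw [this]
  rw [Real.log_mul (by positivity) hx.ne', Real.log_inv]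
  norm_num

lemma hsKernel_one_zero {y : ℝ} (hy : 0 < y) : hsKernel 1 0 y = ⊥ := by
  unfold hsKernel elogr
  rw [if_neg one_ne_zero]
  norm_num [EReal.add_bot]

lemma ofReal_max_zero (r : ℝ) : ENNReal.ofReal (max r 0) = ENNReal.ofReal r := by
  rcases le_total r 0 with h | h
  · rw [max_eq_right h, ENNReal.ofReal_zero, ENNReal.ofReal_of_nonpos h]
  · rw [max_eq_left h]

lemma lintegral_ofReal_le {μ : Measure ℝ} [IsProbabilityMeasure μ] {f g : ℝ → ℝ} {C : ℝ}
    (h : ∀ᵐ x ∂μ, f x ≤ g x + C) :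
    ∫⁻ x, ENNReal.ofReal (f x) ∂μ ≤ ∫⁻ x, ENNReal.ofReal (g x) ∂μ + ENNReal.ofReal C := by
  calc ∫⁻ x, ENNReal.ofReal (f x) ∂μ
      ≤ ∫⁻ x, ENNReal.ofReal (g x) + ENNReal.ofReal C ∂μ := by
        refine lintegral_mono_ae (h.mono fun x hx => ?_)
        exact le_trans (ENNReal.ofReal_le_ofReal hx) ENNReal.ofReal_add_le
    _ = ∫⁻ x, ENNReal.ofReal (g x) ∂μ + ENNReal.ofReal C := by
        rw [lintegral_add_right' _ aemeasurable_const, lintegral_const, measure_univ, mul_one]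

lemma key1 {c y x : ℝ} (hc0 : 0 < c) (hc1 : c < 1) (hy : 0 < y) (hx : 0 ≤ x) :
    Real.log (1 + x) ≤ max (Real.log y + c⁻¹ * Real.log (c * y⁻¹ * x + 1 - c)) 0
      + (Real.log (max (y / c) (1 - c)⁻¹) + |Real.log y|) := by
  have h1c : (0:ℝ) < 1 - c := by linarith
  have hnn : 0 ≤ c * y⁻¹ * x := by positivity
  have htpos : 0 < c * y⁻¹ * x + 1 - c := by linarith
  set K := max (y / c) (1 - c)⁻¹ with hKdef
  have hK1 : (1 - c)⁻¹ ≤ K := le_max_right _ _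
  have hK2 : y / c ≤ K := le_max_left _ _
  have hKpos : 0 < K := lt_of_lt_of_le (inv_pos.2 h1c) hK1
  have h1 : 1 + x ≤ K * (c * y⁻¹ * x + 1 - c) := by
    have e1 : 1 ≤ K * (1 - c) := by
      have := mul_le_mul_of_nonneg_right hK1 h1c.le
      rwa [inv_mul_cancel₀ h1c.ne'] at this
    have e2 : x ≤ K * (c * y⁻¹ * x) := by
      have e3 : (y / c) * (c * y⁻¹ * x) = x := by field_simp
      nlinarith [mul_le_mul_of_nonneg_right hK2 hnn]
    nlinarith
  have h2 : Real.log (1 + x) ≤ Real.log K + Real.log (c * y⁻¹ * x + 1 - c) := by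
    rw [← Real.log_mul hKpos.ne' htpos.ne']
    exact Real.log_le_log (by linarith) h1
  have h3 : Real.log (c * y⁻¹ * x + 1 - c) ≤
      max (Real.log y + c⁻¹ * Real.log (c * y⁻¹ * x + 1 - c)) 0 + |Real.log y| := by
    rcases le_or_gt (Real.log (c * y⁻¹ * x + 1 - c)) 0 with h | h
    · have h4 := le_max_right (Real.log y + c⁻¹ * Real.log (c * y⁻¹ * x + 1 - c)) (0:ℝ)
      have h5 := abs_nonneg (Real.log y)
      linarith
    · have hcc : 1 ≤ c⁻¹ := by nlinarith [inv_pos.2 hc0, mul_inv_cancel₀ hc0.ne']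
      have h6 := le_mul_of_one_le_left h.le hcc
      have h7 := le_max_left (Real.log y + c⁻¹ * Real.log (c * y⁻¹ * x + 1 - c)) (0:ℝ)
      have h8 := neg_abs_le (Real.log y)
      linarith
  linarith

lemma key2 {c x : ℝ} (hc0 : 0 < c) (hc1 : c < 1) (hx : 0 ≤ x) :
    Real.log 1 + c⁻¹ * Real.log (c * 1⁻¹ * x + 1 - c) ≤ c⁻¹ * Real.log (1 + x) := by
  rw [Real.log_one, zero_add]
  have hnn : 0 ≤ c * 1⁻¹ * x := by positivity
  refine mul_le_mul_of_nonneg_left ?_ (inv_nonneg.2 hc0.le)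
  refine Real.log_le_log (by linarith) (by nlinarith)

lemma key3 {c y x : ℝ} (hc0 : 0 < c) (hc1 : c < 1) (hy : 0 < y) (hx : 0 ≤ x) :
    -(Real.log y + c⁻¹ * Real.log (c * y⁻¹ * x + 1 - c)) ≤
      0 + (-Real.log y + c⁻¹ * (-Real.log (1 - c))) := by
  have h1c : (0:ℝ) < 1 - c := by linarith
  have hnn : 0 ≤ c * y⁻¹ * x := by positivity
  have ht : Real.log (1 - c) ≤ Real.log (c * y⁻¹ * x + 1 - c) :=
    Real.log_le_log h1c (by linarith)
  have hci : (0:ℝ) ≤ c⁻¹ := by positivity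
  nlinarith [mul_le_mul_of_nonneg_left ht hci]

lemma key4 {x : ℝ} (hx : 0 ≤ x) :
    Real.log (1 + x) ≤ max (Real.log x) 0 + Real.log 2 := by
  rcases le_total x 1 with h | h
  · have h1 : Real.log (1 + x) ≤ Real.log 2 := Real.log_le_log (by linarith) (by linarith)
    have h2 := le_max_right (Real.log x) (0:ℝ)
    linarith
  · have h1 : Real.log (1 + x) ≤ Real.log (2 * x) := Real.log_le_log (by linarith) (by linarith)
    rw [Real.log_mul two_ne_zero (by linarith)] at h1
    have h2 := le_max_left (Real.log x) (0:ℝ)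
    linarith

lemma key5 {x : ℝ} (hx : 0 ≤ x) : Real.log x ≤ Real.log (1 + x) := by
  rcases eq_or_lt_of_le hx with h | h
  · rw [← h]; simp [Real.log_zero]
  · exact Real.log_le_log h (by linarith)

/-- for `c ∈ (0,1]`, `[μ]_c < ∞` iff `∫ log(1+x) dμ < ∞`. -/
theorem hsBary_lt_top_iff (c : ℝ) (hc : c ∈ Set.Ioc (0 : ℝ) 1) (μ : Measure ℝ)
    [IsProbabilityMeasure μ] (hsupp : μ (Set.Iio 0) = 0)
    (hsemi : c = 1 →
      (Integrable (fun x => max (Real.log x) 0) μ ∨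
        (μ {0} = 0 ∧ Integrable (fun x => max (-Real.log x) 0) μ))) :
    hsBary c μ < ⊤ ↔ Integrable (fun x => Real.log (1 + x)) μ := by
  obtain ⟨hc0, hc1⟩ := hc
  have hae : ∀ᵐ x ∂μ, 0 ≤ x := by
    rw [ae_iff]
    have he : {x : ℝ | ¬ 0 ≤ x} = Set.Iio 0 := by ext z; simp
    rw [he]; exact hsupp
  have hmeas : Measurable fun x : ℝ => Real.log (1 + x) :=
    Real.measurable_log.comp (measurable_const.add measurable_id)
  have hnnL : 0 ≤ᵐ[μ] fun x => Real.log (1 + x) :=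
    hae.mono fun x hx => Real.log_nonneg (by linarith)
  have hInt_iff : Integrable (fun x => Real.log (1 + x)) μ ↔
      ∫⁻ x, ENNReal.ofReal (Real.log (1 + x)) ∂μ < ⊤ := by
    constructor
    · intro h
      rw [← hasFiniteIntegral_iff_ofReal hnnL]; exact h.2
    · intro h
      exact ⟨hmeas.aestronglyMeasurable, (hasFiniteIntegral_iff_ofReal hnnL).2 h⟩
  rw [hInt_iff]
  simp only [hsBary]
  rw [eexp_lt_top_iff]
  simp only [ne_eq, iInf_eq_top, not_forall, eIntegral, coe_ennreal_sub_eq_top_iff,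
    not_and, not_not]
  set L := ∫⁻ x, ENNReal.ofReal (Real.log (1 + x)) ∂μ with hLdef
  rcases lt_or_eq_of_le hc1 with hlt | heq
  · -- c < 1
    constructor
    · rintro ⟨y, h⟩
      have hy : (0:ℝ) < y := y.2
      have hker : ∀ᵐ x ∂μ, hsKernel c x y =
          ((Real.log y + c⁻¹ * Real.log (c * (y:ℝ)⁻¹ * x + 1 - c) : ℝ) : EReal) :=
        hae.mono fun x hx => by
          refine hsKernel_eq_coe hc0 y.2 ?_
          have h1 : 0 ≤ c * (y:ℝ)⁻¹ * x := by positivity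
          linarith
      have hP : (∫⁻ x, erealToENNReal (hsKernel c x y) ∂μ) =
          ∫⁻ x, ENNReal.ofReal (Real.log y + c⁻¹ * Real.log (c * (y:ℝ)⁻¹ * x + 1 - c)) ∂μ :=
        lintegral_congr_ae (hker.mono fun x hx => by simp only [hx, erealToENNReal_coe])
      have hN : (∫⁻ x, erealToENNReal (-hsKernel c x y) ∂μ) =
          ∫⁻ x, ENNReal.ofReal (-(Real.log y + c⁻¹ * Real.log (c * (y:ℝ)⁻¹ * x + 1 - c))) ∂μ :=
        lintegral_congr_ae (hker.mono fun x hx => by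
          simp only [hx, ← EReal.coe_neg, erealToENNReal_coe])
      have hNne : (∫⁻ x, erealToENNReal (-hsKernel c x y) ∂μ) ≠ ⊤ := by
        rw [hN]
        have hb : ∀ᵐ x ∂μ, -(Real.log y + c⁻¹ * Real.log (c * (y:ℝ)⁻¹ * x + 1 - c)) ≤
            (0:ℝ) + (-Real.log y + c⁻¹ * (-Real.log (1 - c))) :=
          hae.mono fun x hx => by simpa using key3 hc0 hlt hy hx
        have := lintegral_ofReal_le (μ := μ) hb
        simp only [ENNReal.ofReal_zero, lintegral_zero, zero_add] at this
        exact (this.trans_lt ENNReal.ofReal_lt_top).ne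
      have hPne : (∫⁻ x, erealToENNReal (hsKernel c x y) ∂μ) ≠ ⊤ := fun hP' => hNne (h hP')
      rw [hP] at hPne
      have hcmp : ∀ᵐ x ∂μ, Real.log (1 + x) ≤
          max (Real.log y + c⁻¹ * Real.log (c * (y:ℝ)⁻¹ * x + 1 - c)) 0
            + (Real.log (max ((y:ℝ) / c) (1 - c)⁻¹) + |Real.log y|) :=
        hae.mono fun x hx => key1 hc0 hlt hy hx
      have h1 := lintegral_ofReal_le (μ := μ) hcmp
      have hmax : (∫⁻ x, ENNReal.ofReal
            (max (Real.log y + c⁻¹ * Real.log (c * (y:ℝ)⁻¹ * x + 1 - c)) 0) ∂μ) =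
          ∫⁻ x, ENNReal.ofReal (Real.log y + c⁻¹ * Real.log (c * (y:ℝ)⁻¹ * x + 1 - c)) ∂μ :=
        lintegral_congr fun x => ofReal_max_zero _
      rw [hmax] at h1
      exact h1.trans_lt (ENNReal.add_lt_top.2 ⟨hPne.lt_top, ENNReal.ofReal_lt_top⟩)
    · intro hL
      refine ⟨⟨1, one_pos⟩, fun hP => absurd hP ?_⟩
      have hker : ∀ᵐ x ∂μ, hsKernel c x (1:ℝ) =
          ((Real.log 1 + c⁻¹ * Real.log (c * (1:ℝ)⁻¹ * x + 1 - c) : ℝ) : EReal) :=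
        hae.mono fun x hx => by
          refine hsKernel_eq_coe hc0 one_pos ?_
          have h1 : 0 ≤ c * (1:ℝ)⁻¹ * x := by positivity
          linarith
      have hP' : (∫⁻ x, erealToENNReal (hsKernel c x (1:ℝ)) ∂μ) =
          ∫⁻ x, ENNReal.ofReal (Real.log 1 + c⁻¹ * Real.log (c * (1:ℝ)⁻¹ * x + 1 - c)) ∂μ :=
        lintegral_congr_ae (hker.mono fun x hx => by simp only [hx, erealToENNReal_coe])
      rw [hP']
      have hb : ∀ᵐ x ∂μ, ENNReal.ofReal (Real.log 1 + c⁻¹ * Real.log (c * (1:ℝ)⁻¹ * x + 1 - c))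
          ≤ ENNReal.ofReal c⁻¹ * ENNReal.ofReal (Real.log (1 + x)) :=
        hae.mono fun x hx => by
          rw [← ENNReal.ofReal_mul (inv_nonneg.2 hc0.le)]
          exact ENNReal.ofReal_le_ofReal (key2 hc0 hlt hx)
      have h2 : (∫⁻ x, ENNReal.ofReal (Real.log 1 + c⁻¹ * Real.log (c * (1:ℝ)⁻¹ * x + 1 - c)) ∂μ)
          ≤ ENNReal.ofReal c⁻¹ * L := by
        calc _ ≤ ∫⁻ x, ENNReal.ofReal c⁻¹ * ENNReal.ofReal (Real.log (1 + x)) ∂μ :=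
              lintegral_mono_ae hb
          _ = ENNReal.ofReal c⁻¹ * L := lintegral_const_mul' _ _ ENNReal.ofReal_ne_top
      exact (h2.trans_lt (ENNReal.mul_lt_top ENNReal.ofReal_lt_top hL)).ne
  · -- c = 1
    subst heq
    have hsemi' := hsemi rfl
    have hPy : ∀ y : ℝ, 0 < y → (∫⁻ x, erealToENNReal (hsKernel 1 x y) ∂μ) =
        ∫⁻ x, ENNReal.ofReal (Real.log x) ∂μ := by
      intro y hy
      refine lintegral_congr_ae (hae.mono fun x hx => ?_)
      show erealToENNReal (hsKernel 1 x y) = ENNReal.ofReal (Real.log x)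
      rcases eq_or_lt_of_le hx with h0 | h0
      · rw [← h0, hsKernel_one_zero hy, erealToENNReal_bot, Real.log_zero, ENNReal.ofReal_zero]
      · rw [hsKernel_one_eq h0 hy, erealToENNReal_coe]
    set P' := ∫⁻ x, ENNReal.ofReal (Real.log x) ∂μ with hP'def
    have hmaxP : (∫⁻ x, ENNReal.ofReal (max (Real.log x) 0) ∂μ) = P' :=
      lintegral_congr fun x => ofReal_max_zero _
    have hfwd : P' ≠ ⊤ → L < ⊤ := by
      intro hP
      have hcmp : ∀ᵐ x ∂μ, Real.log (1 + x) ≤ max (Real.log x) 0 + Real.log 2 :=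
        hae.mono fun x hx => key4 hx
      have h1 := lintegral_ofReal_le (μ := μ) hcmp
      rw [hmaxP] at h1
      exact h1.trans_lt (ENNReal.add_lt_top.2 ⟨hP.lt_top, ENNReal.ofReal_lt_top⟩)
    constructor
    · rintro ⟨y, h⟩
      rw [hPy y y.2] at h
      by_cases hP : P' = ⊤
      · rcases hsemi' with hi | ⟨h0, hi⟩
        · refine hfwd (fun hP'' => ?_)
          have h2 := (hasFiniteIntegral_iff_ofReal
            (Eventually.of_forall fun x => le_max_right (Real.log x) (0:ℝ))).1 hi.2
          rw [hmaxP] at h2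
          exact h2.ne hP''
        · exfalso
          have hN := h hP
          have haepos : ∀ᵐ x ∂μ, 0 < x := by
            have hIic : μ (Set.Iic 0) = 0 := by
              have he : Set.Iic (0:ℝ) = Set.Iio 0 ∪ {0} := by
                ext z; simp [le_iff_lt_or_eq]
              rw [he]
              exact le_antisymm ((measure_union_le _ _).trans
                (by rw [hsupp, h0]; simp)) zero_le
            rw [ae_iff]
            have he : {x : ℝ | ¬ 0 < x} = Set.Iic 0 := by ext z; simp
            rw [he]; exact hIic
          have hNeq : (∫⁻ x, erealToENNReal (-hsKernel 1 x y) ∂μ) =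
              ∫⁻ x, ENNReal.ofReal (-Real.log x) ∂μ :=
            lintegral_congr_ae (haepos.mono fun x hx => by
              simp only [hsKernel_one_eq hx y.2, ← EReal.coe_neg, erealToENNReal_coe])
          rw [hNeq] at hN
          have h2 := (hasFiniteIntegral_iff_ofReal
            (Eventually.of_forall fun x => le_max_right (-Real.log x) (0:ℝ))).1 hi.2
          have hmaxN : (∫⁻ x, ENNReal.ofReal (max (-Real.log x) 0) ∂μ) =
              ∫⁻ x, ENNReal.ofReal (-Real.log x) ∂μ :=
            lintegral_congr fun x => ofReal_max_zero _
          rw [hmaxN] at h2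
          exact h2.ne hN
      · exact hfwd hP
    · intro hL
      refine ⟨⟨1, one_pos⟩, fun hP => absurd hP ?_⟩
      rw [hPy 1 one_pos]
      have hle : P' ≤ L :=
        lintegral_mono_ae (hae.mono fun x hx => ENNReal.ofReal_le_ofReal (key5 hx))
      exact (hle.trans_lt hL).ne
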